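/- Let N, K ≥ 1 be integers, let t > 1 be real with conjugate exponent t' = t/(t−1), and define A : ℝ^K → ℝ^K by A(y) = ‖y‖^{t−2} y for y ≠ 0 and A(0) = 0. Let η_n : ℝ^N → ℝ^K be measurable functions with η_n → 0 almost everywhere on ℝ^N and sup_n ∫_{ℝ^N} ‖η_n‖^t dx < ∞. Then for every measurable w : ℝ^N → ℝ^K with ∫_{ℝ^N} ‖w‖^t dx < ∞ one has ∫_{ℝ^N} ‖A(η_n + w) − A(η_n) − A(w)‖^{t'} dx → 0 as n → ∞. -/

import Mathlib

open Filter MeasureTheory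
open scoped Topology ENNReal

section Amap
variable {E : Type*} [NormedAddCommGroup E] [NormedSpace ℝ E]

noncomputable def Amap (t : ℝ) (y : E) : E := (‖y‖ ^ (t - 2)) • y

lemma norm_Amap (t : ℝ) (ht : 1 < t) (y : E) : ‖Amap t y‖ = ‖y‖ ^ (t - 1) := by
  rcases eq_or_ne y 0 with rfl | hy
  · simp [Amap, Real.zero_rpow (by linarith : t - 1 ≠ 0)]
  · have h0 : (0:ℝ) < ‖y‖ := norm_pos_iff.2 hy
    rw [Amap, norm_smul, Real.norm_eq_abs,
      abs_of_nonneg (Real.rpow_nonneg (norm_nonneg y) _),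
      ← Real.rpow_add_one h0.ne' (t - 2), show t - 2 + 1 = t - 1 by ring]

lemma continuous_Amap (t : ℝ) (ht : 1 < t) : Continuous (Amap t : E → E) := by
  rw [continuous_iff_continuousAt]
  intro y
  rcases eq_or_ne y 0 with rfl | hy
  · have h1 : Tendsto (fun y : E => ‖y‖ ^ (t - 1)) (𝓝 0) (𝓝 0) := by
      have h2 : ContinuousAt (fun r : ℝ => r ^ (t - 1)) ‖(0:E)‖ := by
        simpa using Real.continuousAt_rpow_const 0 (t - 1) (Or.inr (by linarith))
      have h2' := h2.comp (continuous_norm.continuousAt (x := (0:E)))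
      simpa [ContinuousAt, Function.comp_def, Real.zero_rpow (by linarith : t - 1 ≠ 0)] using h2'
    have h3 : Tendsto (fun y : E => ‖Amap t y‖) (𝓝 0) (𝓝 0) := by
      simpa [norm_Amap t ht] using h1
    have h4 := tendsto_zero_iff_norm_tendsto_zero.2 h3
    simpa [ContinuousAt, Amap] using h4
  · have hn : ‖y‖ ≠ 0 := norm_ne_zero_iff.2 hy
    exact ((Real.continuousAt_rpow_const ‖y‖ (t - 2) (Or.inl hn)).comp
      continuous_norm.continuousAt).smul continuousAt_id

lemma Amap_smul (t : ℝ) {s : ℝ} (hs : 0 < s) (y : E) :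
    Amap t (s • y) = s ^ (t - 1) • Amap t y := by
  unfold Amap
  rw [norm_smul, Real.norm_eq_abs, abs_of_pos hs,
    Real.mul_rpow hs.le (norm_nonneg y), smul_smul, smul_smul]
  congr 1
  rw [show t - 1 = t - 2 + 1 by ring, Real.rpow_add_one hs.ne']
  ring

end Amap

lemma Amap_key {E : Type*} [NormedAddCommGroup E] [NormedSpace ℝ E] [ProperSpace E]
    (t : ℝ) (ht : 1 < t) {ε : ℝ} (hε : 0 < ε) :
    ∃ C : ℝ, 0 ≤ C ∧ ∀ a b : E,
      ‖Amap t (a + b) - Amap t a‖ ≤ ε * ‖a‖ ^ (t - 1) + C * ‖b‖ ^ (t - 1) := by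
  have ht1 : (0:ℝ) < t - 1 := by linarith
  have h2pos : (0:ℝ) < (2:ℝ) ^ (t - 1) := Real.rpow_pos_of_pos (by norm_num) _
  set ε₀ : ℝ := ε * ((2:ℝ) ^ (t - 1))⁻¹ with hε₀def
  have hε₀ : 0 < ε₀ := by positivity
  -- uniform continuity of Amap on the closed ball of radius 2
  have huc : UniformContinuousOn (Amap t : E → E) (Metric.closedBall 0 2) :=
    (isCompact_closedBall (0:E) 2).uniformContinuousOn_of_continuous
      (continuous_Amap t ht).continuousOn
  rw [Metric.uniformContinuousOn_iff] at huc
  obtain ⟨δ₀, hδ₀, hδ⟩ := huc ε₀ hε₀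
  set δ : ℝ := min δ₀ (1/2) with hδdef
  have hδpos : 0 < δ := lt_min hδ₀ (by norm_num)
  have hδle : δ ≤ 1/2 := min_le_right _ _
  have hδδ₀ : δ ≤ δ₀ := min_le_left _ _
  have hδt : (0:ℝ) < δ ^ (t - 1) := Real.rpow_pos_of_pos hδpos _
  refine ⟨2 / δ ^ (t - 1), by positivity, ?_⟩
  -- first prove the normalized claim
  have key : ∀ a b : E, ‖a‖ + ‖b‖ = 1 →
      ‖Amap t (a + b) - Amap t a‖ ≤ ε * ‖a‖ ^ (t - 1) + (2 / δ ^ (t - 1)) * ‖b‖ ^ (t - 1) := by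
    intro a b hab
    have hna : ‖a‖ ≤ 1 := by have := norm_nonneg b; linarith
    have hnab : ‖a + b‖ ≤ 1 := le_trans (norm_add_le a b) (le_of_eq hab)
    rcases lt_or_ge ‖b‖ δ with hb | hb
    · -- small b case: use uniform continuity
      have hmem1 : a + b ∈ Metric.closedBall (0:E) 2 := by
        simp only [Metric.mem_closedBall, dist_zero_right]; linarith
      have hmem2 : a ∈ Metric.closedBall (0:E) 2 := by
        simp only [Metric.mem_closedBall, dist_zero_right]; linarith
      have hdist : dist (a + b) a < δ₀ := by
        rw [dist_eq_norm]; simpa using lt_of_lt_of_le hb hδδ₀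
      have h1 : dist (Amap t (a + b)) (Amap t a) < ε₀ := hδ _ hmem1 _ hmem2 hdist
      rw [dist_eq_norm] at h1
      have hna2 : (1:ℝ)/2 ≤ ‖a‖ := by
        have : ‖b‖ ≤ 1/2 := le_trans hb.le hδle
        linarith
      have h2 : ε₀ ≤ ε * ‖a‖ ^ (t - 1) := by
        have h3 : ((2:ℝ) ^ (t - 1))⁻¹ ≤ ‖a‖ ^ (t - 1) := by
          have h4 : ((2:ℝ)⁻¹) ^ (t - 1) ≤ ‖a‖ ^ (t - 1) :=
            Real.rpow_le_rpow (by norm_num) (by linarith) ht1.le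
          rwa [Real.inv_rpow (by norm_num)] at h4
        calc ε₀ = ε * ((2:ℝ) ^ (t - 1))⁻¹ := rfl
          _ ≤ ε * ‖a‖ ^ (t - 1) := by
              exact mul_le_mul_of_nonneg_left h3 hε.le
      have hb0 : 0 ≤ (2 / δ ^ (t - 1)) * ‖b‖ ^ (t - 1) := by positivity
      linarith
    · -- large b case: crude bound
      have h1 : ‖Amap t (a + b) - Amap t a‖ ≤ 2 := by
        calc ‖Amap t (a + b) - Amap t a‖ ≤ ‖Amap t (a + b)‖ + ‖Amap t a‖ := norm_sub_le _ _
          _ = ‖a + b‖ ^ (t - 1) + ‖a‖ ^ (t - 1) := by rw [norm_Amap t ht, norm_Amap t ht]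
          _ ≤ 1 + 1 := by
              gcongr
              · exact Real.rpow_le_one (norm_nonneg _) hnab ht1.le
              · exact Real.rpow_le_one (norm_nonneg _) hna ht1.le
          _ = 2 := by norm_num
      have h2 : (2:ℝ) ≤ (2 / δ ^ (t - 1)) * ‖b‖ ^ (t - 1) := by
        have h3 : δ ^ (t - 1) ≤ ‖b‖ ^ (t - 1) :=
          Real.rpow_le_rpow hδpos.le hb ht1.le
        rw [div_mul_eq_mul_div, le_div_iff₀ hδt]
        nlinarith
      have h4 : 0 ≤ ε * ‖a‖ ^ (t - 1) := by positivity
      linarith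
  -- now deduce the general claim by homogeneity
  intro a b
  rcases eq_or_ne (‖a‖ + ‖b‖) 0 with hs | hs
  · have ha : a = 0 := norm_eq_zero.1 (by have := norm_nonneg a; have := norm_nonneg b; linarith)
    have hb : b = 0 := norm_eq_zero.1 (by have := norm_nonneg a; have := norm_nonneg b; linarith)
    subst ha; subst hb
    simp
    positivity
  · set s : ℝ := ‖a‖ + ‖b‖ with hsdef
    have hspos : 0 < s := lt_of_le_of_ne (by positivity) (Ne.symm hs)
    have hsinv : 0 < s⁻¹ := inv_pos.2 hspos
    have hnorm : ‖s⁻¹ • a‖ + ‖s⁻¹ • b‖ = 1 := by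
      rw [norm_smul, norm_smul, Real.norm_eq_abs, abs_of_pos hsinv]
      field_simp
      exact hsdef.symm
    have hK := key (s⁻¹ • a) (s⁻¹ • b) hnorm
    have hab : s⁻¹ • a + s⁻¹ • b = s⁻¹ • (a + b) := (smul_add _ _ _).symm
    rw [hab, Amap_smul t hsinv, Amap_smul t hsinv, ← smul_sub, norm_smul,
      Real.norm_eq_abs, abs_of_nonneg (Real.rpow_nonneg hsinv.le _),
      norm_smul, norm_smul, Real.norm_eq_abs, abs_of_pos hsinv,
      Real.mul_rpow hsinv.le (norm_nonneg a), Real.mul_rpow hsinv.le (norm_nonneg b)] at hK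
    have hst : 0 < s ^ (t - 1) := Real.rpow_pos_of_pos hspos _
    have hsinvt : (s⁻¹) ^ (t - 1) = (s ^ (t - 1))⁻¹ := Real.inv_rpow hspos.le _
    rw [hsinvt] at hK
    have := mul_le_mul_of_nonneg_left hK hst.le
    calc ‖Amap t (a + b) - Amap t a‖
        = s ^ (t - 1) * ((s ^ (t - 1))⁻¹ * ‖Amap t (a + b) - Amap t a‖) := by
          field_simp
      _ ≤ s ^ (t - 1) * (ε * ((s ^ (t - 1))⁻¹ * ‖a‖ ^ (t - 1)) +
            2 / δ ^ (t - 1) * ((s ^ (t - 1))⁻¹ * ‖b‖ ^ (t - 1))) := this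
      _ = ε * ‖a‖ ^ (t - 1) + 2 / δ ^ (t - 1) * ‖b‖ ^ (t - 1) := by
          field_simp

lemma add_rpow_le_two_rpow (x y p : ℝ) (hx : 0 ≤ x) (hy : 0 ≤ y) (hp : 0 ≤ p) :
    (x + y) ^ p ≤ 2 ^ p * (x ^ p + y ^ p) := by
  have h1 : x + y ≤ 2 * max x y := by
    rcases le_total x y with h | h
    · rw [max_eq_right h]; linarith
    · rw [max_eq_left h]; linarith
  have hmax : 0 ≤ max x y := le_max_of_le_left hx
  calc (x + y) ^ p ≤ (2 * max x y) ^ p :=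
        Real.rpow_le_rpow (by positivity) h1 hp
    _ = 2 ^ p * (max x y) ^ p := Real.mul_rpow (by norm_num) hmax
    _ ≤ 2 ^ p * (x ^ p + y ^ p) := by
        have : (max x y) ^ p ≤ x ^ p + y ^ p := by
          rcases max_cases x y with ⟨h, _⟩ | ⟨h, _⟩ <;> rw [h]
          · have : 0 ≤ y ^ p := Real.rpow_nonneg hy p
            linarith
          · have : 0 ≤ x ^ p := Real.rpow_nonneg hx p
            linarith
        have h2 : (0:ℝ) ≤ 2 ^ p := Real.rpow_nonneg (by norm_num) p
        nlinarith

theorem stmt9_aux (N K : ℕ) (t : ℝ) (ht : 1 < t)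
    (η : ℕ → EuclideanSpace ℝ (Fin N) → EuclideanSpace ℝ (Fin K))
    (hη : ∀ n, Measurable (η n))
    (hae : ∀ᵐ x : EuclideanSpace ℝ (Fin N), Tendsto (fun n => η n x) atTop (𝓝 0))
    (hbdd : (⨆ n, ∫⁻ x : EuclideanSpace ℝ (Fin N), ENNReal.ofReal (‖η n x‖ ^ t)) < ⊤)
    (w : EuclideanSpace ℝ (Fin N) → EuclideanSpace ℝ (Fin K)) (hw : Measurable w)
    (hwint : (∫⁻ x : EuclideanSpace ℝ (Fin N), ENNReal.ofReal (‖w x‖ ^ t)) < ⊤) :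
    Tendsto (fun n => ∫⁻ x : EuclideanSpace ℝ (Fin N),
        ENNReal.ofReal
          (‖Amap t (η n x + w x) - Amap t (η n x) - Amap t (w x)‖ ^ (t / (t - 1))))
      atTop (𝓝 0) := by
  have ht1 : (0:ℝ) < t - 1 := by linarith
  set t' : ℝ := t / (t - 1) with ht'def
  have ht'pos : 0 < t' := by positivity
  have ht'1 : 1 ≤ t' := by rw [ht'def, le_div_iff₀ ht1]; linarith
  have htt' : (t - 1) * t' = t := by rw [ht'def]; field_simp
  set f : ℕ → EuclideanSpace ℝ (Fin N) → EuclideanSpace ℝ (Fin K) :=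
    fun n x => Amap t (η n x + w x) - Amap t (η n x) - Amap t (w x) with hfdef
  have hAc : Continuous (Amap t : EuclideanSpace ℝ (Fin K) → EuclideanSpace ℝ (Fin K)) :=
    continuous_Amap t ht
  have hAm : Measurable (Amap t : EuclideanSpace ℝ (Fin K) → EuclideanSpace ℝ (Fin K)) :=
    hAc.measurable
  have hfm : ∀ n, Measurable (f n) := fun n =>
    ((hAm.comp ((hη n).add hw)).sub (hAm.comp (hη n))).sub (hAm.comp hw)
  -- a.e. convergence of the integrand to 0
  have hae0 : ∀ᵐ x : EuclideanSpace ℝ (Fin N),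
      Tendsto (fun n => ENNReal.ofReal (‖f n x‖ ^ t')) atTop (𝓝 0) := by
    filter_upwards [hae] with x hx
    have h1 : Tendsto (fun n => η n x + w x) atTop (𝓝 (w x)) := by
      simpa using hx.add (tendsto_const_nhds (x := w x))
    have h2 : Tendsto (fun n => Amap t (η n x + w x)) atTop (𝓝 (Amap t (w x))) :=
      (hAc.tendsto _).comp h1
    have h3 : Tendsto (fun n => Amap t (η n x)) atTop (𝓝 0) := by
      have := (hAc.tendsto _).comp hx
      simpa [Amap, Function.comp_def] using this
    have h4 : Tendsto (fun n => f n x) atTop (𝓝 0) := by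
      have := (h2.sub h3).sub (tendsto_const_nhds (x := Amap t (w x)))
      simpa using this
    have h5 : Tendsto (fun n => ‖f n x‖ ^ t') atTop (𝓝 0) := by
      have hn : Tendsto (fun n => ‖f n x‖) atTop (𝓝 0) := by
        simpa using h4.norm
      have hc : ContinuousAt (fun r : ℝ => r ^ t') 0 :=
        Real.continuousAt_rpow_const 0 t' (Or.inr ht'pos.le)
      have := hc.tendsto.comp hn
      simpa [Function.comp_def, Real.zero_rpow ht'pos.ne'] using this
    have := (ENNReal.continuous_ofReal.tendsto 0).comp h5
    simpa [Function.comp_def] using this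
  set F : ℕ → ℝ≥0∞ := fun n => ∫⁻ x, ENNReal.ofReal (‖f n x‖ ^ t') with hFdef
  set M : ℝ≥0∞ := ⨆ n, ∫⁻ x, ENNReal.ofReal (‖η n x‖ ^ t) with hMdef
  have hlimsup : ∀ ε : ℝ, 0 < ε → limsup F atTop ≤ ENNReal.ofReal ε * M := by
    intro ε hε
    have h2t : (0:ℝ) < (2:ℝ) ^ t' := Real.rpow_pos_of_pos (by norm_num) _
    set ε₁ : ℝ := min 1 (ε / 2 ^ t') with hε₁def
    have hε₁pos : 0 < ε₁ := lt_min one_pos (by positivity)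
    obtain ⟨C, hC0, hC⟩ := Amap_key (E := EuclideanSpace ℝ (Fin K)) t ht hε₁pos
    set D : ℝ := 2 ^ t' * (C + 1) ^ t' with hDdef
    have hD0 : 0 ≤ D := by positivity
    -- pointwise real bound
    have ptw : ∀ n x, ‖f n x‖ ^ t' ≤ ε * ‖η n x‖ ^ t + D * ‖w x‖ ^ t := by
      intro n x
      set a := η n x
      set b := w x
      have step1 : ‖f n x‖ ≤ ε₁ * ‖a‖ ^ (t - 1) + (C + 1) * ‖b‖ ^ (t - 1) := by
        have h1 : ‖f n x‖ ≤ ‖Amap t (a + b) - Amap t a‖ + ‖Amap t b‖ := by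
          exact norm_sub_le (Amap t (a + b) - Amap t a) (Amap t b)
        have h2 := hC a b
        have h3 : ‖Amap t b‖ = ‖b‖ ^ (t - 1) := norm_Amap t ht b
        nlinarith [Real.rpow_nonneg (norm_nonneg b) (t - 1)]
      have hX : 0 ≤ ε₁ * ‖a‖ ^ (t - 1) := by positivity
      have hY : 0 ≤ (C + 1) * ‖b‖ ^ (t - 1) := by positivity
      have step2 : ‖f n x‖ ^ t' ≤
          (ε₁ * ‖a‖ ^ (t - 1) + (C + 1) * ‖b‖ ^ (t - 1)) ^ t' :=
        Real.rpow_le_rpow (norm_nonneg _) step1 ht'pos.le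
      have step3 := add_rpow_le_two_rpow _ _ t' hX hY ht'pos.le
      have hXp : (ε₁ * ‖a‖ ^ (t - 1)) ^ t' = ε₁ ^ t' * ‖a‖ ^ t := by
        rw [Real.mul_rpow hε₁pos.le (Real.rpow_nonneg (norm_nonneg a) _),
          ← Real.rpow_mul (norm_nonneg a), htt']
      have hYp : ((C + 1) * ‖b‖ ^ (t - 1)) ^ t' = (C + 1) ^ t' * ‖b‖ ^ t := by
        rw [Real.mul_rpow (by linarith) (Real.rpow_nonneg (norm_nonneg b) _),
          ← Real.rpow_mul (norm_nonneg b), htt']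
      have hsmall : 2 ^ t' * ε₁ ^ t' ≤ ε := by
        have h1 : ε₁ ^ t' ≤ ε₁ := by
          have := Real.rpow_le_rpow_of_exponent_ge hε₁pos (min_le_left _ _) ht'1
          simpa using this
        have h2 : ε₁ ≤ ε / 2 ^ t' := min_le_right _ _
        calc 2 ^ t' * ε₁ ^ t' ≤ 2 ^ t' * (ε / 2 ^ t') := by
              have := h1.trans h2
              exact mul_le_mul_of_nonneg_left this h2t.le
          _ = ε := by field_simp
      have hat : 0 ≤ ‖a‖ ^ t := Real.rpow_nonneg (norm_nonneg a) t
      have hbt : 0 ≤ ‖b‖ ^ t := Real.rpow_nonneg (norm_nonneg b) t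
      calc ‖f n x‖ ^ t' ≤ 2 ^ t' * ((ε₁ * ‖a‖ ^ (t-1)) ^ t' + ((C+1) * ‖b‖ ^ (t-1)) ^ t') :=
            step2.trans step3
        _ = (2 ^ t' * ε₁ ^ t') * ‖a‖ ^ t + D * ‖b‖ ^ t := by
            rw [hXp, hYp, hDdef]; ring
        _ ≤ ε * ‖a‖ ^ t + D * ‖b‖ ^ t := by
            have := mul_le_mul_of_nonneg_right hsmall hat
            linarith
    -- ENNReal machinery
    set ψ : ℕ → EuclideanSpace ℝ (Fin N) → ℝ≥0∞ :=
      fun n x => ENNReal.ofReal ε * ENNReal.ofReal (‖η n x‖ ^ t) with hψdef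
    set B : EuclideanSpace ℝ (Fin N) → ℝ≥0∞ :=
      fun x => ENNReal.ofReal (D * ‖w x‖ ^ t) with hBdef
    set G : ℕ → EuclideanSpace ℝ (Fin N) → ℝ≥0∞ :=
      fun n x => ENNReal.ofReal (‖f n x‖ ^ t') - ψ n x with hGdef
    have hle : ∀ n x, ENNReal.ofReal (‖f n x‖ ^ t') ≤ ψ n x + B x := by
      intro n x
      calc ENNReal.ofReal (‖f n x‖ ^ t')
          ≤ ENNReal.ofReal (ε * ‖η n x‖ ^ t + D * ‖w x‖ ^ t) :=
            ENNReal.ofReal_le_ofReal (ptw n x)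
        _ ≤ ENNReal.ofReal (ε * ‖η n x‖ ^ t) + ENNReal.ofReal (D * ‖w x‖ ^ t) :=
            ENNReal.ofReal_add_le
        _ = ψ n x + B x := by rw [hψdef, ENNReal.ofReal_mul hε.le]
    have hGleB : ∀ n x, G n x ≤ B x := fun n x => tsub_le_iff_left.2 (hle n x)
    have hφmeas : ∀ n, Measurable (fun x => ENNReal.ofReal (‖f n x‖ ^ t')) := fun n =>
      (((Real.continuous_rpow_const ht'pos.le).measurable.comp (hfm n).norm)).ennreal_ofReal
    have hψmeas : ∀ n, Measurable (ψ n) := fun n =>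
      measurable_const.mul
        (((Real.continuous_rpow_const (by linarith : (0:ℝ) ≤ t)).measurable.comp
          (hη n).norm)).ennreal_ofReal
    have hGmeas : ∀ n, Measurable (G n) := fun n => (hφmeas n).sub (hψmeas n)
    have hG0 : ∀ᵐ x : EuclideanSpace ℝ (Fin N), Tendsto (fun n => G n x) atTop (𝓝 0) := by
      filter_upwards [hae0] with x hx
      exact tendsto_of_tendsto_of_tendsto_of_le_of_le tendsto_const_nhds hx
        (fun n => zero_le) (fun n => tsub_le_self)
    have hB_int : (∫⁻ x, B x) ≠ ⊤ := by
      have hBe : ∀ x, B x = ENNReal.ofReal D * ENNReal.ofReal (‖w x‖ ^ t) := fun x =>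
        ENNReal.ofReal_mul hD0
      calc (∫⁻ x, B x) = ENNReal.ofReal D * ∫⁻ x, ENNReal.ofReal (‖w x‖ ^ t) := by
            simp_rw [hBe]; exact lintegral_const_mul' _ _ ENNReal.ofReal_ne_top
        _ ≠ ⊤ := ENNReal.mul_ne_top ENNReal.ofReal_ne_top hwint.ne
    have hGtend : Tendsto (fun n => ∫⁻ x, G n x) atTop (𝓝 0) := by
      have := tendsto_lintegral_of_dominated_convergence B (fun n => hGmeas n)
        (fun n => Eventually.of_forall (hGleB n)) hB_int hG0
      simpa using this
    have hFle : ∀ n, F n ≤ (∫⁻ x, G n x) + ENNReal.ofReal ε * M := by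
      intro n
      calc F n ≤ ∫⁻ x, (G n x + ψ n x) := lintegral_mono (fun x => le_tsub_add)
        _ = (∫⁻ x, G n x) + ∫⁻ x, ψ n x := lintegral_add_left (hGmeas n) _
        _ = (∫⁻ x, G n x) + ENNReal.ofReal ε * ∫⁻ x, ENNReal.ofReal (‖η n x‖ ^ t) := by
            rw [hψdef]
            congr 1
            exact lintegral_const_mul' _ _ ENNReal.ofReal_ne_top
        _ ≤ (∫⁻ x, G n x) + ENNReal.ofReal ε * M := by
            gcongr
            exact le_iSup (fun n => ∫⁻ x, ENNReal.ofReal (‖η n x‖ ^ t)) n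
    calc limsup F atTop
        ≤ limsup (fun n => (∫⁻ x, G n x) + ENNReal.ofReal ε * M) atTop :=
          limsup_le_limsup (Eventually.of_forall hFle)
      _ = ENNReal.ofReal ε * M := by
          have h := hGtend.add (tendsto_const_nhds (x := ENNReal.ofReal ε * M))
          rw [zero_add] at h
          exact h.limsup_eq
  -- conclude : limsup = 0, hence tendsto 0
  have hls0 : limsup F atTop = 0 := by
    refine le_antisymm ?_ zero_le
    refine ENNReal.le_of_forall_pos_le_add fun c hc _ => ?_
    rw [zero_add]
    rcases eq_or_ne M 0 with hM0 | hM0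
    · calc limsup F atTop ≤ ENNReal.ofReal 1 * M := hlimsup 1 one_pos
        _ = 0 := by rw [hM0, mul_zero]
        _ ≤ c := zero_le
    · have hMlt : M < ⊤ := hbdd
      set m := M.toReal with hm
      have hmpos : 0 < m := ENNReal.toReal_pos hM0 hMlt.ne
      have hcpos : (0:ℝ) < (c:ℝ) := by exact_mod_cast hc
      set ε : ℝ := (c:ℝ) / (2 * m) with hεdef
      have hεpos : 0 < ε := by positivity
      have hkey : ENNReal.ofReal ε * M ≤ (c : ℝ≥0∞) := by
        rw [← ENNReal.ofReal_toReal hMlt.ne, ← hm, ← ENNReal.ofReal_mul hεpos.le]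
        have h1 : ε * m = (c:ℝ) / 2 := by rw [hεdef]; field_simp
        rw [h1]
        calc ENNReal.ofReal ((c:ℝ) / 2) ≤ ENNReal.ofReal (c:ℝ) :=
              ENNReal.ofReal_le_ofReal (by linarith)
          _ = (c : ℝ≥0∞) := ENNReal.ofReal_coe_nnreal
      exact (hlimsup ε hεpos).trans hkey
  have hli0 : liminf F atTop = 0 :=
    le_antisymm (hls0 ▸ liminf_le_limsup) zero_le
  exact tendsto_of_liminf_eq_limsup hli0 hls0

theorem stmt9 (N K : ℕ) (hN : 1 ≤ N) (hK : 1 ≤ K) (t : ℝ) (ht : 1 < t)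
    (η : ℕ → EuclideanSpace ℝ (Fin N) → EuclideanSpace ℝ (Fin K))
    (hη : ∀ n, Measurable (η n))
    (hae : ∀ᵐ x : EuclideanSpace ℝ (Fin N), Tendsto (fun n => η n x) atTop (𝓝 0))
    (hbdd : (⨆ n, ∫⁻ x : EuclideanSpace ℝ (Fin N), ENNReal.ofReal (‖η n x‖ ^ t)) < ⊤)
    (w : EuclideanSpace ℝ (Fin N) → EuclideanSpace ℝ (Fin K)) (hw : Measurable w)
    (hwint : (∫⁻ x : EuclideanSpace ℝ (Fin N), ENNReal.ofReal (‖w x‖ ^ t)) < ⊤) :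
    Tendsto (fun n => ∫⁻ x : EuclideanSpace ℝ (Fin N),
        ENNReal.ofReal
          (‖(‖η n x + w x‖ ^ (t - 2)) • (η n x + w x)
              - (‖η n x‖ ^ (t - 2)) • (η n x)
              - (‖w x‖ ^ (t - 2)) • (w x)‖ ^ (t / (t - 1)))) atTop (𝓝 0) :=
  stmt9_aux N K t ht η hη hae hbdd w hw hwint
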